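/- Let L > 0, N ≥ 0, Δ > 0, and let f have L-Lipschitz derivative with samples u_k = f(kΔ) + η_k, |η_k| ≤ N. Suppose that for some k ≥ 1 and some estimate β ∈ ℝ the inequality |u_0 − u_k + β·kΔ| ≤ L k²Δ²/2 holds. Then |β − f'(kΔ)| ≤ L·kΔ + 2N/(kΔ). -/

import Mathlib

/-- Taylor-type bound from Lipschitz derivative. -/
lemma taylor_bound (L : ℝ) (hL : 0 < L) (T : ℝ) (hT : 0 < T)
    (f f' : ℝ → ℝ)
    (hdiff : ∀ x, 0 ≤ x → HasDerivAt f (f' x) x)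
    (hlip : ∀ a b, 0 ≤ a → 0 ≤ b → |f' a - f' b| ≤ L * |a - b|) :
    |f 0 - f T + f' T * T| ≤ L * T ^ 2 / 2 := by
  have hcont : ContinuousOn f' (Set.Icc 0 T) := by
    apply LipschitzOnWith.continuousOn (K := Real.toNNReal L)
    apply LipschitzOnWith.of_dist_le_mul
    intro a ha b hb
    rw [Real.dist_eq, Real.dist_eq, Real.coe_toNNReal _ hL.le]
    exact hlip a b ha.1 hb.1
  have hint : IntervalIntegrable f' MeasureTheory.volume 0 T := by
    apply ContinuousOn.intervalIntegrable
    rwa [Set.uIcc_of_le hT.le]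
  have hftc : ∫ t in (0:ℝ)..T, f' t = f T - f 0 := by
    apply intervalIntegral.integral_eq_sub_of_hasDerivAt
    · intro t ht
      rcases Set.mem_uIcc.mp ht with h | h
      exacts [hdiff t h.1, hdiff t (hT.le.trans h.1)]
    · exact hint
  have hint2 : IntervalIntegrable (fun t => f' t - f' T) MeasureTheory.volume 0 T :=
    hint.sub intervalIntegrable_const
  have key : f T - f 0 - f' T * T = ∫ t in (0:ℝ)..T, (f' t - f' T) := by
    rw [intervalIntegral.integral_sub hint intervalIntegrable_const, hftc]
    simp [mul_comm]
  have hbound : |∫ t in (0:ℝ)..T, (f' t - f' T)| ≤ L * T ^ 2 / 2 := by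
    have hgint : IntervalIntegrable (fun t => L * (T - t)) MeasureTheory.volume 0 T := by
      apply ContinuousOn.intervalIntegrable
      exact (continuousOn_const.mul (continuousOn_const.sub continuousOn_id))
    have h1 : |∫ t in (0:ℝ)..T, (f' t - f' T)| ≤ |∫ t in (0:ℝ)..T, L * (T - t)| := by
      rw [← Real.norm_eq_abs (∫ t in (0:ℝ)..T, (f' t - f' T))]
      refine (intervalIntegral.norm_integral_le_of_norm_le hT.le ?_ hgint).trans (le_abs_self _)
      refine Filter.Eventually.of_forall (fun t ht => ?_)
      have h := hlip t T ht.1.le hT.le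
      calc ‖f' t - f' T‖ = |f' t - f' T| := rfl
        _ ≤ L * |t - T| := h
        _ = L * (T - t) := by rw [abs_of_nonpos (by linarith [ht.2])]; ring
    have h2 : ∫ t in (0:ℝ)..T, L * (T - t) = L * T ^ 2 / 2 := by
      rw [intervalIntegral.integral_const_mul, intervalIntegral.integral_sub
        intervalIntegrable_const intervalIntegral.intervalIntegrable_id]
      simp
      ring
    have h2abs : |∫ t in (0:ℝ)..T, L * (T - t)| = L * T ^ 2 / 2 := by
      rw [h2, abs_of_nonneg (by positivity)]
    linarith [h1, h2abs.le, h2abs.ge]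
  calc |f 0 - f T + f' T * T| = |f T - f 0 - f' T * T| := by rw [abs_sub_comm]; ring_nf
    _ ≤ L * T ^ 2 / 2 := by rw [key]; exact hbound

/-- Concluding step of the transient accuracy proof (Lemma 2): from
`|u_0 − u_k + β·kΔ| ≤ L k²Δ²/2` with noisy samples `u_j = f(jΔ) + η_j`, `|η_j| ≤ N`,
one obtains `|β − f'(kΔ)| ≤ L·kΔ + 2N/(kΔ)`. -/
theorem sample_based_transient_accuracy
    (L N Δ : ℝ) (hL : 0 < L) (hN : 0 ≤ N) (hΔ : 0 < Δ)
    (f f' : ℝ → ℝ)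
    (hdiff : ∀ x, 0 ≤ x → HasDerivAt f (f' x) x)
    (hlip : ∀ a b, 0 ≤ a → 0 ≤ b → |f' a - f' b| ≤ L * |a - b|)
    (η : ℕ → ℝ) (hη : ∀ j, |η j| ≤ N)
    (k : ℕ) (hk : 1 ≤ k) (β : ℝ)
    (hβ : |(f 0 + η 0) - (f ((k : ℝ) * Δ) + η k) + β * ((k : ℝ) * Δ)|
      ≤ L * (k : ℝ) ^ 2 * Δ ^ 2 / 2) :
    |β - f' ((k : ℝ) * Δ)| ≤ L * ((k : ℝ) * Δ) + 2 * N / ((k : ℝ) * Δ) := by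
  set T : ℝ := (k : ℝ) * Δ with hTdef
  have hkpos : (0:ℝ) < (k : ℝ) := by exact_mod_cast hk
  have hT : 0 < T := by positivity
  have htay : |f 0 - f T + f' T * T| ≤ L * T ^ 2 / 2 :=
    taylor_bound L hL T hT f f' hdiff hlip
  have hβ' : |(f 0 + η 0) - (f T + η k) + β * T| ≤ L * T ^ 2 / 2 := by
    calc |(f 0 + η 0) - (f T + η k) + β * T| ≤ L * (k : ℝ) ^ 2 * Δ ^ 2 / 2 := hβ
      _ = L * T ^ 2 / 2 := by rw [hTdef]; ring
  have hη0 := hη 0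
  have hηk := hη k
  have hmain : |(β - f' T) * T| ≤ L * T ^ 2 + 2 * N := by
    have : (β - f' T) * T =
        ((f 0 + η 0) - (f T + η k) + β * T) - (f 0 - f T + f' T * T) - η 0 + η k := by ring
    rw [this]
    calc |((f 0 + η 0) - (f T + η k) + β * T) - (f 0 - f T + f' T * T) - η 0 + η k|
        ≤ |((f 0 + η 0) - (f T + η k) + β * T) - (f 0 - f T + f' T * T) - η 0| + |η k| :=
          abs_add_le _ _
      _ ≤ |((f 0 + η 0) - (f T + η k) + β * T) - (f 0 - f T + f' T * T)| + |η 0| + |η k| := by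
          linarith [abs_sub (((f 0 + η 0) - (f T + η k) + β * T) - (f 0 - f T + f' T * T)) (η 0)]
      _ ≤ |((f 0 + η 0) - (f T + η k) + β * T)| + |(f 0 - f T + f' T * T)| + |η 0| + |η k| := by
          linarith [abs_sub ((f 0 + η 0) - (f T + η k) + β * T) (f 0 - f T + f' T * T)]
      _ ≤ L * T ^ 2 / 2 + L * T ^ 2 / 2 + N + N := by linarith
      _ = L * T ^ 2 + 2 * N := by ring
  have habs : |β - f' T| * T ≤ L * T ^ 2 + 2 * N := by
    rwa [abs_mul, abs_of_pos hT] at hmain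
  have : |β - f' T| ≤ (L * T ^ 2 + 2 * N) / T := by
    rw [le_div_iff₀ hT]; exact habs
  calc |β - f' T| ≤ (L * T ^ 2 + 2 * N) / T := this
    _ = L * T + 2 * N / T := by field_simp
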